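/- An element g ∈ SL₂(ℝ) lies in the commensurator of SL₂(ℤ) in SL₂(ℝ) if and only if there exists a real number c > 0 such that every entry of the matrix c·g is rational (equivalently, g = (det A)^{−1/2}·A for some A ∈ GL₂(ℚ) with det A > 0). -/

import Mathlib

open Matrix

/-- The subgroup `SL₂(ℤ)` of `SL₂(ℝ)`, via entrywise inclusion. -/
noncomputable def SL2Z_in_SL2R : Subgroup (Matrix.SpecialLinearGroup (Fin 2) ℝ) :=
  (Matrix.SpecialLinearGroup.map (n := Fin 2) (Int.castRingHom ℝ)).range

namespace SL2Zcomm

open Pointwise Matrix.SpecialLinearGroup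

lemma mem_SL2Z_iff (x : Matrix.SpecialLinearGroup (Fin 2) ℝ) :
    x ∈ SL2Z_in_SL2R ↔ ∀ i j : Fin 2, ∃ k : ℤ, (x : Matrix (Fin 2) (Fin 2) ℝ) i j = k := by
  constructor
  · rintro ⟨B, rfl⟩ i j
    exact ⟨B.1 i j, by simp [Matrix.SpecialLinearGroup.map_apply_coe]⟩
  · intro h
    choose k hk using h
    have hdet : (Matrix.of k).det = 1 := by
      have h1 : (Matrix.of k).map ((↑) : ℤ → ℝ) = (x : Matrix (Fin 2) (Fin 2) ℝ) := by
        ext i j; exact (hk i j).symm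
      have := congrArg Matrix.det h1
      have hx := x.2
      rw [Matrix.det_fin_two, Matrix.det_fin_two] at this
      rw [Matrix.det_fin_two]
      rw [Matrix.det_fin_two] at hx
      simp only [Matrix.map_apply] at this
      rw [hx] at this
      exact_mod_cast this
    refine ⟨(⟨Matrix.of k, hdet⟩ : Matrix.SpecialLinearGroup (Fin 2) ℤ), ?_⟩
    ext i j
    rw [hk i j]; rfl

def Umat : Matrix.SpecialLinearGroup (Fin 2) ℝ :=
  ⟨!![1, 1; 0, 1], by simp [Matrix.det_fin_two_of]⟩

def Lmat : Matrix.SpecialLinearGroup (Fin 2) ℝ :=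
  ⟨!![1, 0; 1, 1], by simp [Matrix.det_fin_two_of]⟩

lemma Umat_pow (n : ℕ) : ((Umat ^ n : Matrix.SpecialLinearGroup (Fin 2) ℝ) :
    Matrix (Fin 2) (Fin 2) ℝ) = !![1, (n : ℝ); 0, 1] := by
  induction n with
  | zero => simp [Matrix.one_fin_two]
  | succ n ih =>
    rw [pow_succ, Matrix.SpecialLinearGroup.coe_mul, ih]
    show _ * (Umat : Matrix (Fin 2) (Fin 2) ℝ) = _
    rw [show (Umat : Matrix (Fin 2) (Fin 2) ℝ) = !![1,1;0,1] from rfl, Matrix.mul_fin_two]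
    norm_num [add_comm]

lemma Lmat_pow (n : ℕ) : ((Lmat ^ n : Matrix.SpecialLinearGroup (Fin 2) ℝ) :
    Matrix (Fin 2) (Fin 2) ℝ) = !![1, 0; (n : ℝ), 1] := by
  induction n with
  | zero => simp [Matrix.one_fin_two]
  | succ n ih =>
    rw [pow_succ, Matrix.SpecialLinearGroup.coe_mul, ih]
    show _ * (Lmat : Matrix (Fin 2) (Fin 2) ℝ) = _
    rw [show (Lmat : Matrix (Fin 2) (Fin 2) ℝ) = !![1,0;1,1] from rfl, Matrix.mul_fin_two]
    norm_num [add_comm]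

lemma Umat_mem : Umat ∈ SL2Z_in_SL2R := by
  refine ⟨(⟨!![1,1;0,1], by simp [Matrix.det_fin_two_of]⟩ : Matrix.SpecialLinearGroup (Fin 2) ℤ), ?_⟩
  ext i j
  show ((Int.castRingHom ℝ).mapMatrix (!![1,1;0,1] : Matrix (Fin 2) (Fin 2) ℤ)) i j = (Umat : Matrix (Fin 2) (Fin 2) ℝ) i j
  fin_cases i <;> fin_cases j <;>
    simp [Umat, Matrix.SpecialLinearGroup.map_apply_coe]

lemma Lmat_mem : Lmat ∈ SL2Z_in_SL2R := by
  refine ⟨(⟨!![1,0;1,1], by simp [Matrix.det_fin_two_of]⟩ : Matrix.SpecialLinearGroup (Fin 2) ℤ), ?_⟩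
  ext i j
  show ((Int.castRingHom ℝ).mapMatrix (!![1,0;1,1] : Matrix (Fin 2) (Fin 2) ℤ)) i j = (Lmat : Matrix (Fin 2) (Fin 2) ℝ) i j
  fin_cases i <;> fin_cases j <;>
    simp [Lmat, Matrix.SpecialLinearGroup.map_apply_coe]

lemma scale_step (x : ℝ) (qx : ℚ) (hx : x ≠ 0) (hxx : x * x = (qx : ℝ)) :
    ∀ y : ℝ, ∀ qy : ℚ, x * y = (qy : ℝ) → ∃ r : ℚ, (|x| / (qx : ℝ)) * y = (r : ℝ) := by
  have hqx : (qx : ℝ) ≠ 0 := by rw [← hxx]; exact mul_ne_zero hx hx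
  intro y qy hy
  rcases hx.lt_or_gt with hneg | hpos
  · refine ⟨-qy / qx, ?_⟩
    rw [abs_of_neg hneg]
    push_cast
    rw [div_mul_eq_mul_div, div_eq_div_iff hqx hqx]
    linear_combination (-(qx : ℝ)) * hy
  · refine ⟨qy / qx, ?_⟩
    rw [abs_of_pos hpos]
    push_cast
    rw [div_mul_eq_mul_div, div_eq_div_iff hqx hqx]
    linear_combination ((qx : ℝ)) * hy

lemma scale_four (a b c d x : ℝ) (hx : x ≠ 0) (qa qb qc qd qx : ℚ)
    (hxx : x * x = (qx : ℝ)) (ha : x * a = (qa : ℝ)) (hb : x * b = (qb : ℝ))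
    (hc : x * c = (qc : ℝ)) (hd : x * d = (qd : ℝ)) :
    ∃ c0 : ℝ, 0 < c0 ∧ (∃ r : ℚ, c0 * a = (r : ℝ)) ∧ (∃ r : ℚ, c0 * b = (r : ℝ)) ∧
      (∃ r : ℚ, c0 * c = (r : ℝ)) ∧ (∃ r : ℚ, c0 * d = (r : ℝ)) := by
  have hqx : (0 : ℝ) < (qx : ℝ) := by rw [← hxx]; exact mul_self_pos.2 hx
  exact ⟨|x| / (qx : ℝ), div_pos (abs_pos.2 hx) hqx,
    scale_step x qx hx hxx a qa ha, scale_step x qx hx hxx b qb hb,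
    scale_step x qx hx hxx c qc hc, scale_step x qx hx hxx d qd hd⟩

lemma ratios (a b c d : ℝ) (hdet : a * d - b * c = 1)
    (q1 q2 q3 q4 q5 q6 : ℚ) (h1 : c * d = (q1 : ℝ)) (h2 : d * d = (q2 : ℝ))
    (h3 : c * c = (q3 : ℝ)) (h4 : a * b = (q4 : ℝ)) (h5 : b * b = (q5 : ℝ))
    (h6 : a * a = (q6 : ℝ)) :
    ∃ c0 : ℝ, 0 < c0 ∧ (∃ r : ℚ, c0 * a = (r : ℝ)) ∧ (∃ r : ℚ, c0 * b = (r : ℝ)) ∧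
      (∃ r : ℚ, c0 * c = (r : ℝ)) ∧ (∃ r : ℚ, c0 * d = (r : ℝ)) := by
  have had : a * d = ((q6 * q2 - q4 * q1 : ℚ) : ℝ) := by
    push_cast
    rw [← h6, ← h2, ← h4, ← h1]
    linear_combination (-(a * d)) * hdet
  have hbc : b * c = ((q6 * q2 - q4 * q1 - 1 : ℚ) : ℝ) := by
    push_cast; push_cast at had
    linear_combination had - hdet
  have hac : a * c = ((q6 * q1 - q4 * q3 : ℚ) : ℝ) := by
    push_cast
    rw [← h6, ← h1, ← h4, ← h3]
    linear_combination (-(a * c)) * hdet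
  have hbd : b * d = ((q4 * q2 - q5 * q1 : ℚ) : ℝ) := by
    push_cast
    rw [← h4, ← h2, ← h5, ← h1]
    linear_combination (-(b * d)) * hdet
  have hne : a ≠ 0 ∨ c ≠ 0 := by
    by_contra h
    push_neg at h
    rw [h.1, h.2] at hdet
    norm_num at hdet
  rcases hne with hne | hne
  · exact scale_four a b c d a hne q6 q4 _ _ q6 h6 h6 h4 hac had
  · exact scale_four a b c d c hne (q6 * q1 - q4 * q3) (q6 * q2 - q4 * q1 - 1) q3 q1 q3 h3
      (by rw [mul_comm]; exact hac) (by rw [mul_comm]; exact hbc) h3 h1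

lemma forward (g : Matrix.SpecialLinearGroup (Fin 2) ℝ)
    (hg : g ∈ Subgroup.Commensurable.commensurator SL2Z_in_SL2R) :
    ∃ c : ℝ, 0 < c ∧ ∀ i j : Fin 2, ∃ r : ℚ,
      c * (g : Matrix (Fin 2) (Fin 2) ℝ) i j = (r : ℝ) := by
  rw [Subgroup.Commensurable.commensurator_mem_iff] at hg
  obtain ⟨hrel, -⟩ := hg
  obtain ⟨n, hn, -, hUn⟩ := Subgroup.exists_pow_mem_of_relIndex_ne_zero hrel Umat_mem
  obtain ⟨m, hm, -, hLm⟩ := Subgroup.exists_pow_mem_of_relIndex_ne_zero hrel Lmat_mem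
  have hU' : g⁻¹ * Umat ^ n * g ∈ SL2Z_in_SL2R := by
    have h := (Subgroup.mem_inf.mp hUn).1
    rw [Subgroup.mem_pointwise_smul_iff_inv_smul_mem, ConjAct.smul_def] at h
    simpa [mul_assoc] using h
  have hL' : g⁻¹ * Lmat ^ m * g ∈ SL2Z_in_SL2R := by
    have h := (Subgroup.mem_inf.mp hLm).1
    rw [Subgroup.mem_pointwise_smul_iff_inv_smul_mem, ConjAct.smul_def] at h
    simpa [mul_assoc] using h
  rw [mem_SL2Z_iff] at hU' hL'
  have hinv : ((g⁻¹ : Matrix.SpecialLinearGroup (Fin 2) ℝ) : Matrix (Fin 2) (Fin 2) ℝ)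
      = !![g.1 1 1, -g.1 0 1; -g.1 1 0, g.1 0 0] := by
    rw [SL2_inv_expl]; rfl
  have hdet : g.1 0 0 * g.1 1 1 - g.1 0 1 * g.1 1 0 = 1 := by
    have := g.2; rwa [Matrix.det_fin_two] at this
  have hn0 : (n : ℝ) ≠ 0 := Nat.cast_ne_zero.2 hn.ne'
  have hm0 : (m : ℝ) ≠ 0 := Nat.cast_ne_zero.2 hm.ne'
  obtain ⟨k1, hk1⟩ := hU' 0 0
  obtain ⟨k2, hk2⟩ := hU' 0 1
  obtain ⟨k3, hk3⟩ := hU' 1 0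
  obtain ⟨k4, hk4⟩ := hL' 0 0
  obtain ⟨k5, hk5⟩ := hL' 0 1
  obtain ⟨k6, hk6⟩ := hL' 1 0
  rw [Matrix.SpecialLinearGroup.coe_mul, Matrix.SpecialLinearGroup.coe_mul, hinv, Umat_pow]
    at hk1 hk2 hk3
  rw [Matrix.SpecialLinearGroup.coe_mul, Matrix.SpecialLinearGroup.coe_mul, hinv, Lmat_pow]
    at hk4 hk5 hk6
  simp only [Matrix.mul_apply, Fin.sum_univ_two, Matrix.cons_val', Matrix.cons_val_zero,
    Matrix.cons_val_one, Matrix.head_cons, Matrix.head_fin_const, Matrix.empty_val',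
    Matrix.cons_val_fin_one, Matrix.of_apply] at hk1 hk2 hk3 hk4 hk5 hk6
  have h1 : g.1 1 0 * g.1 1 1 = (((k1 : ℚ) - 1) / n : ℚ) := by
    push_cast
    rw [eq_div_iff hn0]
    linear_combination hk1 - hdet
  have h2 : g.1 1 1 * g.1 1 1 = (((k2 : ℚ)) / n : ℚ) := by
    push_cast
    rw [eq_div_iff hn0]
    linear_combination hk2
  have h3 : g.1 1 0 * g.1 1 0 = ((-(k3 : ℚ)) / n : ℚ) := by
    push_cast
    rw [eq_div_iff hn0]
    linear_combination -hk3
  have h4 : g.1 0 0 * g.1 0 1 = ((1 - (k4 : ℚ)) / m : ℚ) := by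
    push_cast
    rw [eq_div_iff hm0]
    linear_combination hdet - hk4
  have h5 : g.1 0 1 * g.1 0 1 = ((-(k5 : ℚ)) / m : ℚ) := by
    push_cast
    rw [eq_div_iff hm0]
    linear_combination -hk5
  have h6 : g.1 0 0 * g.1 0 0 = (((k6 : ℚ)) / m : ℚ) := by
    push_cast
    rw [eq_div_iff hm0]
    linear_combination hk6
  obtain ⟨c0, hc0, ha, hb, hc, hd⟩ :=
    ratios (g.1 0 0) (g.1 0 1) (g.1 1 0) (g.1 1 1) hdet _ _ _ _ _ _ h1 h2 h3 h4 h5 h6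
  refine ⟨c0, hc0, ?_⟩
  intro i j
  fin_cases i <;> fin_cases j
  exacts [ha, hb, hc, hd]



lemma map_int_inj : Function.Injective
    (fun M : Matrix (Fin 2) (Fin 2) ℤ => M.map ((↑) : ℤ → ℝ)) := by
  intro A B h
  ext i j
  have := congrFun (congrFun h i) j
  simpa [Matrix.map_apply] using this

lemma conj_mem (g : Matrix.SpecialLinearGroup (Fin 2) ℝ)
    (P Q : Matrix (Fin 2) (Fin 2) ℤ) (c' : ℝ) (hc' : c' ≠ 0)
    (hP : P.map ((↑) : ℤ → ℝ) = c' • ((g : Matrix (Fin 2) (Fin 2) ℝ)))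
    (hQ : Q.map ((↑) : ℤ → ℝ) = c' • ((g⁻¹ : Matrix.SpecialLinearGroup (Fin 2) ℝ) :
      Matrix (Fin 2) (Fin 2) ℝ))
    (N : ℕ) (hm : ((N : ℝ)) = c' * c') :
    ∀ x ∈ Subgroup.map (Matrix.SpecialLinearGroup.map (n := Fin 2) (Int.castRingHom ℝ))
      (CongruenceSubgroup.Gamma N), g * x * g⁻¹ ∈ SL2Z_in_SL2R := by
  rintro x ⟨B, hB, rfl⟩
  rw [SetLike.mem_coe, CongruenceSubgroup.Gamma_mem] at hB
  have hdvd : ∀ i j : Fin 2, (N : ℤ) ∣ (B.1 i j - (1 : Matrix (Fin 2) (Fin 2) ℤ) i j) := by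
    intro i j
    rw [← ZMod.intCast_zmod_eq_zero_iff_dvd]
    push_cast
    fin_cases i <;> fin_cases j <;>
      simp [hB.1, hB.2.1, hB.2.2.1, hB.2.2.2, Matrix.one_apply]
  choose t ht using hdvd
  have hBmat : B.1 = 1 + (N : ℤ) • Matrix.of t := by
    ext i j
    have := ht i j
    simp only [Matrix.add_apply, Matrix.smul_apply, Matrix.of_apply, smul_eq_mul]
    omega
  have hmm : ∀ A B : Matrix (Fin 2) (Fin 2) ℤ,
      ((A * B).map ((↑) : ℤ → ℝ)) = A.map ((↑) : ℤ → ℝ) * B.map ((↑) : ℤ → ℝ) :=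
    fun A B => Matrix.map_mul (f := Int.castRingHom ℝ)
  have hsmulmap : ∀ (k : ℤ) (A : Matrix (Fin 2) (Fin 2) ℤ),
      ((k • A).map ((↑) : ℤ → ℝ)) = (k : ℝ) • (A.map ((↑) : ℤ → ℝ)) := by
    intro k A
    ext i j
    simp only [Matrix.map_apply, Matrix.smul_apply, smul_eq_mul, Int.cast_mul]
  have honemap : ((1 : Matrix (Fin 2) (Fin 2) ℤ).map ((↑) : ℤ → ℝ)) = 1 := by
    ext i j
    simp [Matrix.map_apply, Matrix.one_apply, apply_ite ((↑) : ℤ → ℝ)]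
  have hgg : (g : Matrix (Fin 2) (Fin 2) ℝ) *
      ((g⁻¹ : Matrix.SpecialLinearGroup (Fin 2) ℝ) : Matrix (Fin 2) (Fin 2) ℝ) = 1 := by
    rw [← Matrix.SpecialLinearGroup.coe_mul, mul_inv_cancel,
      Matrix.SpecialLinearGroup.coe_one]
  have hsmul2 : ∀ (A B : Matrix (Fin 2) (Fin 2) ℝ),
      (c' • A) * (c' • B) = (c' * c') • (A * B) := by
    intro A B
    rw [smul_mul_assoc, mul_smul_comm, smul_smul]
  -- P * Q = N • 1
  have hPQ : P * Q = (N : ℤ) • (1 : Matrix (Fin 2) (Fin 2) ℤ) := by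
    apply map_int_inj
    show (P * Q).map _ = ((N : ℤ) • (1 : Matrix (Fin 2) (Fin 2) ℤ)).map _
    rw [hmm, hP, hQ, hsmul2, hgg, hsmulmap, honemap, ← hm]
    norm_num
  -- the conjugated matrix equals an integral matrix
  set Z : Matrix (Fin 2) (Fin 2) ℤ := 1 + P * Matrix.of t * Q with hZ
  set f := Matrix.SpecialLinearGroup.map (n := Fin 2) (Int.castRingHom ℝ) with hf
  have hx : ((f B : Matrix.SpecialLinearGroup (Fin 2) ℝ) : Matrix (Fin 2) (Fin 2) ℝ)
      = B.1.map ((↑) : ℤ → ℝ) :=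
    Matrix.SpecialLinearGroup.map_apply_coe _ _
  have key : ((g * f B * g⁻¹ : Matrix.SpecialLinearGroup (Fin 2) ℝ) :
      Matrix (Fin 2) (Fin 2) ℝ) = Z.map ((↑) : ℤ → ℝ) := by
    apply smul_right_injective (Matrix (Fin 2) (Fin 2) ℝ) (mul_ne_zero hc' hc')
    show (c' * c') • _ = (c' * c') • _
    calc (c' * c') • ((g * f B * g⁻¹ : Matrix.SpecialLinearGroup (Fin 2) ℝ) :
          Matrix (Fin 2) (Fin 2) ℝ)
        = (c' • (g : Matrix (Fin 2) (Fin 2) ℝ)) *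
            ((f B : Matrix.SpecialLinearGroup (Fin 2) ℝ) : Matrix (Fin 2) (Fin 2) ℝ) *
            (c' • ((g⁻¹ : Matrix.SpecialLinearGroup (Fin 2) ℝ) :
              Matrix (Fin 2) (Fin 2) ℝ)) := by
          rw [Matrix.SpecialLinearGroup.coe_mul, Matrix.SpecialLinearGroup.coe_mul]
          simp only [smul_mul_assoc, mul_smul_comm, smul_smul]
      _ = (P.map ((↑) : ℤ → ℝ)) * (B.1.map ((↑) : ℤ → ℝ)) * (Q.map ((↑) : ℤ → ℝ)) := by
          rw [hP, hQ, hx]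
      _ = (P * B.1 * Q).map ((↑) : ℤ → ℝ) := by rw [hmm, hmm]
      _ = (((N : ℤ)) • Z).map ((↑) : ℤ → ℝ) := by
          congr 1
          rw [hBmat, hZ, smul_add]
          rw [mul_add, add_mul, mul_one]
          rw [hPQ]
          congr 1
          rw [Matrix.mul_smul, Matrix.smul_mul]
      _ = (c' * c') • (Z.map ((↑) : ℤ → ℝ)) := by rw [hsmulmap, ← hm]; norm_num
  rw [mem_SL2Z_iff]
  intro i j
  exact ⟨Z i j, by rw [key]; simp [Matrix.map_apply]⟩

lemma clear_denom (q : ℚ) (n : ℕ) (h : q.den ∣ n) : ∃ k : ℤ, (n : ℚ) * q = (k : ℚ) := by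
  obtain ⟨t, ht⟩ := h
  refine ⟨t * q.num, ?_⟩
  have := Rat.mul_den_eq_num q
  rw [ht]
  push_cast
  linear_combination (t : ℚ) * this

lemma backward (g : Matrix.SpecialLinearGroup (Fin 2) ℝ)
    (c : ℝ) (hc : 0 < c)
    (h : ∀ i j : Fin 2, ∃ r : ℚ, c * (g : Matrix (Fin 2) (Fin 2) ℝ) i j = (r : ℝ)) :
    g ∈ Subgroup.Commensurable.commensurator SL2Z_in_SL2R := by
  choose r hr using h
  set D : ℕ := (r 0 0).den * ((r 0 1).den * ((r 1 0).den * (r 1 1).den)) with hD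
  have hDpos : 0 < D := by
    apply Nat.pos_of_ne_zero
    simp [hD, (r 0 0).den_nz, (r 0 1).den_nz, (r 1 0).den_nz, (r 1 1).den_nz]
  have hdvd : ∀ i j : Fin 2, (r i j).den ∣ D := by
    intro i j
    fin_cases i <;> fin_cases j
    · exact dvd_mul_right _ _
    · exact (dvd_mul_right _ _).mul_left _
    · exact ((dvd_mul_right _ _).mul_left _).mul_left _
    · exact ((dvd_mul_left _ _).mul_left _).mul_left _
  have hk := fun i j => clear_denom (r i j) D (hdvd i j)
  choose k hk using hk
  set c' : ℝ := (D : ℝ) * c with hc'def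
  have hc'pos : 0 < c' := mul_pos (by exact_mod_cast hDpos) hc
  have hP : ∀ i j : Fin 2, c' * (g : Matrix (Fin 2) (Fin 2) ℝ) i j = ((k i j : ℤ) : ℝ) := by
    intro i j
    have h1 : ((D : ℚ) * r i j : ℚ) = ((k i j : ℤ) : ℚ) := hk i j
    have h2 : (((D : ℚ) * r i j : ℚ) : ℝ) = ((k i j : ℤ) : ℝ) := by exact_mod_cast h1
    push_cast at h2
    rw [hc'def, mul_assoc, hr i j]
    exact h2
  have hinv : ((g⁻¹ : Matrix.SpecialLinearGroup (Fin 2) ℝ) : Matrix (Fin 2) (Fin 2) ℝ)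
      = !![g.1 1 1, -g.1 0 1; -g.1 1 0, g.1 0 0] := by
    rw [Matrix.SpecialLinearGroup.SL2_inv_expl]; rfl
  have hdet : g.1 0 0 * g.1 1 1 - g.1 0 1 * g.1 1 0 = 1 := by
    have := g.2; rwa [Matrix.det_fin_two] at this
  set P : Matrix (Fin 2) (Fin 2) ℤ := Matrix.of (fun i j => k i j) with hPdef
  set Q : Matrix (Fin 2) (Fin 2) ℤ := !![k 1 1, -(k 0 1); -(k 1 0), k 0 0] with hQdef
  have hPmap : P.map ((↑) : ℤ → ℝ) = c' • ((g : Matrix (Fin 2) (Fin 2) ℝ)) := by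
    ext i j
    simp only [Matrix.map_apply, Matrix.smul_apply, smul_eq_mul, hPdef, Matrix.of_apply]
    exact (hP i j).symm
  have hQent : ∀ i j : Fin 2, c' * ((g⁻¹ : Matrix.SpecialLinearGroup (Fin 2) ℝ) :
      Matrix (Fin 2) (Fin 2) ℝ) i j = ((Q i j : ℤ) : ℝ) := by
    intro i j
    rw [hinv]
    fin_cases i <;> fin_cases j <;> simp [hQdef]
    · exact hP 1 1
    · exact hP 0 1
    · exact hP 1 0
    · exact hP 0 0
  have hQmap : Q.map ((↑) : ℤ → ℝ) = c' • ((g⁻¹ : Matrix.SpecialLinearGroup (Fin 2) ℝ) :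
      Matrix (Fin 2) (Fin 2) ℝ) := by
    ext i j
    simp only [Matrix.map_apply, Matrix.smul_apply, smul_eq_mul]
    exact (hQent i j).symm
  set mz : ℤ := k 0 0 * k 1 1 - k 0 1 * k 1 0 with hmzdef
  have hmzr : ((mz : ℤ) : ℝ) = c' * c' := by
    push_cast [hmzdef]
    rw [← hP 0 0, ← hP 1 1, ← hP 0 1, ← hP 1 0]
    linear_combination (c' * c') * hdet
  have hmzpos : 0 < mz := by
    have : (0 : ℝ) < (mz : ℝ) := by rw [hmzr]; positivity
    exact_mod_cast this
  set N : ℕ := mz.toNat with hNdef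
  have hNz : ((N : ℕ) : ℤ) = mz := Int.toNat_of_nonneg hmzpos.le
  have hNr : ((N : ℕ) : ℝ) = c' * c' := by
    rw [← hmzr]
    exact_mod_cast congrArg (fun z : ℤ => (z : ℝ)) hNz
  have hNne : N ≠ 0 := by
    intro h0
    rw [h0] at hNz
    omega
  haveI : NeZero N := ⟨hNne⟩
  have hconj1 := conj_mem g P Q c' hc'pos.ne' hPmap hQmap N hNr
  have hconj2 := conj_mem g⁻¹ Q P c' hc'pos.ne' hQmap (by rw [inv_inv]; exact hPmap) N hNr
  set f := Matrix.SpecialLinearGroup.map (n := Fin 2) (Int.castRingHom ℝ) with hf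
  set ΓN : Subgroup (Matrix.SpecialLinearGroup (Fin 2) ℝ) :=
    Subgroup.map f (CongruenceSubgroup.Gamma N) with hΓN
  have hinj : Function.Injective f := by
    intro A B hAB
    ext i j
    have := congrArg (fun M : Matrix.SpecialLinearGroup (Fin 2) ℝ =>
      (M : Matrix (Fin 2) (Fin 2) ℝ) i j) hAB
    simp only [hf, Matrix.SpecialLinearGroup.map_apply_coe, RingHom.mapMatrix_apply,
      Matrix.map_apply, Int.coe_castRingHom] at this
    exact_mod_cast this
  haveI hGNfin : (CongruenceSubgroup.Gamma N).FiniteIndex := Subgroup.finiteIndex_ker _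
  have hrelN : ΓN.relIndex SL2Z_in_SL2R ≠ 0 := by
    have h1 : (ΓN.comap f).index = ΓN.relIndex f.range := Subgroup.index_comap ΓN f
    have hcm : ΓN.comap f = CongruenceSubgroup.Gamma N := by
      rw [hΓN]
      exact Subgroup.comap_map_eq_self_of_injective hinj _
    have hrange : f.range = SL2Z_in_SL2R := by rw [hf]; rfl
    rw [hcm, hrange] at h1
    rw [← h1]
    exact hGNfin.index_ne_zero
  have hΓN_le : ΓN ≤ SL2Z_in_SL2R := by
    rintro x ⟨B, -, rfl⟩
    exact ⟨B, rfl⟩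
  have hsub_g : ΓN ≤ ConjAct.toConjAct g • SL2Z_in_SL2R := by
    intro x hx
    have hmem := hconj2 x hx
    rw [inv_inv] at hmem
    rw [Subgroup.mem_pointwise_smul_iff_inv_smul_mem, ConjAct.smul_def]
    simpa [mul_assoc] using hmem
  have hsub_ginv : ΓN ≤ ConjAct.toConjAct g⁻¹ • SL2Z_in_SL2R := by
    intro x hx
    have hmem := hconj1 x hx
    rw [Subgroup.mem_pointwise_smul_iff_inv_smul_mem, ConjAct.smul_def]
    simpa [mul_assoc] using hmem
  have comp : ∀ h0 : Matrix.SpecialLinearGroup (Fin 2) ℝ,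
      ΓN ≤ ConjAct.toConjAct h0 • SL2Z_in_SL2R →
      (ConjAct.toConjAct h0 • SL2Z_in_SL2R).relIndex SL2Z_in_SL2R ≠ 0 := by
    intro h0 hle
    have hle2 : ΓN.subgroupOf SL2Z_in_SL2R ≤
        (ConjAct.toConjAct h0 • SL2Z_in_SL2R).subgroupOf SL2Z_in_SL2R :=
      Subgroup.comap_mono hle
    have hdvd2 := Subgroup.index_dvd_of_le hle2
    intro h0z
    rw [Subgroup.relIndex] at h0z
    rw [h0z] at hdvd2
    rw [zero_dvd_iff] at hdvd2
    exact hrelN hdvd2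
  rw [Subgroup.Commensurable.commensurator_mem_iff]
  refine ⟨comp g hsub_g, ?_⟩
  have hswap : SL2Z_in_SL2R.relIndex (ConjAct.toConjAct g • SL2Z_in_SL2R)
      = ((ConjAct.toConjAct g)⁻¹ • SL2Z_in_SL2R).relIndex
        ((ConjAct.toConjAct g)⁻¹ • (ConjAct.toConjAct g • SL2Z_in_SL2R)) :=
    Nat.card_congr (Subgroup.quotConjEquiv SL2Z_in_SL2R
      (ConjAct.toConjAct g • SL2Z_in_SL2R) (ConjAct.toConjAct g)⁻¹)
  rw [hswap, inv_smul_smul, ← map_inv]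
  exact comp g⁻¹ hsub_ginv

end SL2Zcomm

/-- `g ∈ SL₂(ℝ)` lies in the commensurator of `SL₂(ℤ)` iff some positive real multiple
of `g` has all entries rational. -/
theorem mem_commensurator_SL2Z_iff
    (g : Matrix.SpecialLinearGroup (Fin 2) ℝ) :
    g ∈ Subgroup.Commensurable.commensurator SL2Z_in_SL2R ↔
      ∃ c : ℝ, 0 < c ∧ ∀ i j : Fin 2, ∃ r : ℚ,
        c * (g : Matrix (Fin 2) (Fin 2) ℝ) i j = (r : ℝ) := by
  constructor
  · exact SL2Zcomm.forward g
  · rintro ⟨c, hc, h⟩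
    exact SL2Zcomm.backward g c hc h
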